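/- The mass M(b) = Σ|b_j|^2 and the Hamiltonian H(b) are conserved quantities for the toy model ODE system −i b_j' = −|b_j|^2 b_j + 2 b_{j-1}^2 conj(b_j) + 2 b_{j+1}^2 conj(b_j): if b(t) is a differentiable solution, then d/dt M(b(t)) = 0 and d/dt H(b(t)) = 0. -/

import Mathlib

/-- The toy-model Hamiltonian. -/
noncomputable def toyH (N : ℕ) (b : ℤ → ℂ) : ℝ :=
  ∑ j ∈ Finset.Icc (-(N : ℤ)) (N : ℤ),
    ((1 / 2) * (‖b j‖) ^ 4
      - 2 * ((((starRingEnd ℂ) (b j)) ^ 2 * (b (j - 1)) ^ 2).re))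

/-- The mass `M(b) = Σ_{j=-N}^N |b_j|²`. -/
noncomputable def toyM (N : ℕ) (b : ℤ → ℂ) : ℝ :=
  ∑ j ∈ Finset.Icc (-(N : ℤ)) (N : ℤ), (‖b j‖) ^ 2

/-- The right-hand side of the toy model ODE. -/
noncomputable def toyD (b : ℝ → ℤ → ℂ) (t : ℝ) (j : ℤ) : ℂ :=
  Complex.I * (-(((‖b t j‖ : ℝ)) : ℂ) ^ 2 * b t j
    + 2 * (b t (j - 1)) ^ 2 * (starRingEnd ℂ) (b t j)
    + 2 * (b t (j + 1)) ^ 2 * (starRingEnd ℂ) (b t j))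

/-- Telescoping sums over `Finset.Icc` in `ℤ`. -/
lemma tele_aux (g : ℤ → ℝ) (a c : ℤ) (hac : a ≤ c) :
    ∑ j ∈ Finset.Icc a c, (g j - g (j + 1)) = g a - g (c + 1) := by
  rw [Finset.sum_sub_distrib]
  have h1 : ∑ j ∈ Finset.Icc a c, g (j + 1) = ∑ j ∈ Finset.Icc (a + 1) (c + 1), g j := by
    rw [← Finset.map_add_right_Icc a c 1, Finset.sum_map]
    simp [addRightEmbedding]
  rw [h1]
  have e1 : Finset.Icc a c = insert a (Finset.Icc (a + 1) c) := by
    ext x; simp only [Finset.mem_Icc, Finset.mem_insert]; omega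
  have e2 : Finset.Icc (a + 1) (c + 1) = insert (c + 1) (Finset.Icc (a + 1) c) := by
    ext x; simp only [Finset.mem_Icc, Finset.mem_insert]; omega
  rw [e1, e2, Finset.sum_insert (by simp), Finset.sum_insert (by simp)]
  ring

lemma abs_sq_aux (z : ℂ) : ((‖z‖ : ℝ) : ℂ) ^ 2 = z * (starRingEnd ℂ) z := by
  rw [← Complex.ofReal_pow, Complex.sq_norm, Complex.mul_conj]

/-- Pointwise identity for the mass computation. -/
lemma mass_point (z u v : ℂ) :
    (Complex.I * (-((‖z‖ : ℝ) : ℂ) ^ 2 * z + 2 * u ^ 2 * (starRingEnd ℂ) z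
        + 2 * v ^ 2 * (starRingEnd ℂ) z) * (starRingEnd ℂ) z
      + z * (starRingEnd ℂ) (Complex.I * (-((‖z‖ : ℝ) : ℂ) ^ 2 * z
        + 2 * u ^ 2 * (starRingEnd ℂ) z + 2 * v ^ 2 * (starRingEnd ℂ) z))).re
      = (4 * Complex.I * u ^ 2 * ((starRingEnd ℂ) z) ^ 2).re
        - (4 * Complex.I * z ^ 2 * ((starRingEnd ℂ) v) ^ 2).re := by
  simp only [abs_sq_aux, map_mul, map_add, map_pow, map_neg, Complex.conj_conj, Complex.conj_I,
    map_ofNat]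
  simp only [Complex.add_re, Complex.mul_re, Complex.mul_im, Complex.add_im, Complex.neg_re,
    Complex.neg_im, Complex.I_re, Complex.I_im, Complex.conj_re, Complex.conj_im,
    Complex.re_ofNat, Complex.im_ofNat, pow_two, Complex.sub_re, Complex.sub_im]
  ring

/-- Pointwise identity for the Hamiltonian computation.  Here `w` plays the role of
`d_{j-1}`, which is left as an atom. -/
lemma ham_point (z u v w : ℂ) :
    (1 / 2 : ℝ) * ((Complex.I * (-((‖z‖ : ℝ) : ℂ) ^ 2 * z
          + 2 * u ^ 2 * (starRingEnd ℂ) z + 2 * v ^ 2 * (starRingEnd ℂ) z) * (starRingEnd ℂ) z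
        + z * (starRingEnd ℂ) (Complex.I * (-((‖z‖ : ℝ) : ℂ) ^ 2 * z
          + 2 * u ^ 2 * (starRingEnd ℂ) z + 2 * v ^ 2 * (starRingEnd ℂ) z))).re
          * (z * (starRingEnd ℂ) z).re
      + (z * (starRingEnd ℂ) z).re
          * (Complex.I * (-((‖z‖ : ℝ) : ℂ) ^ 2 * z
          + 2 * u ^ 2 * (starRingEnd ℂ) z + 2 * v ^ 2 * (starRingEnd ℂ) z) * (starRingEnd ℂ) z
        + z * (starRingEnd ℂ) (Complex.I * (-((‖z‖ : ℝ) : ℂ) ^ 2 * z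
          + 2 * u ^ 2 * (starRingEnd ℂ) z + 2 * v ^ 2 * (starRingEnd ℂ) z))).re)
      - 2 * ((((starRingEnd ℂ) (Complex.I * (-((‖z‖ : ℝ) : ℂ) ^ 2 * z
            + 2 * u ^ 2 * (starRingEnd ℂ) z + 2 * v ^ 2 * (starRingEnd ℂ) z)) * (starRingEnd ℂ) z
          + (starRingEnd ℂ) z * (starRingEnd ℂ) (Complex.I * (-((‖z‖ : ℝ) : ℂ) ^ 2 * z
            + 2 * u ^ 2 * (starRingEnd ℂ) z + 2 * v ^ 2 * (starRingEnd ℂ) z))) * (u * u)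
        + ((starRingEnd ℂ) z * (starRingEnd ℂ) z) * (w * u + u * w)).re)
    = (-4 * (((starRingEnd ℂ) z * (starRingEnd ℂ) z) * (u * w)).re)
      - (-4 * (((starRingEnd ℂ) v * (starRingEnd ℂ) v) * (z * (Complex.I
          * (-((‖z‖ : ℝ) : ℂ) ^ 2 * z + 2 * u ^ 2 * (starRingEnd ℂ) z
            + 2 * v ^ 2 * (starRingEnd ℂ) z)))).re) := by
  simp only [abs_sq_aux, map_mul, map_add, map_pow, map_neg, Complex.conj_conj, Complex.conj_I,
    map_ofNat]
  simp only [Complex.add_re, Complex.mul_re, Complex.mul_im, Complex.add_im, Complex.neg_re,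
    Complex.neg_im, Complex.I_re, Complex.I_im, Complex.conj_re, Complex.conj_im,
    Complex.re_ofNat, Complex.im_ofNat, pow_two, Complex.sub_re, Complex.sub_im]
  ring

/-- Mass and Hamiltonian are conserved along solutions of the toy model
`−i b_j' = −|b_j|² b_j + 2 b_{j-1}² conj(b_j) + 2 b_{j+1}² conj(b_j)`
(equivalently `b_j' = i (−|b_j|² b_j + 2 b_{j-1}² conj(b_j) + 2 b_{j+1}² conj(b_j))`)
with the boundary convention that `b` vanishes outside `[-N, N]`. -/
theorem toyM_toyH_conserved (N : ℕ) (b : ℝ → ℤ → ℂ)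
    (hsupp : ∀ t : ℝ, ∀ j : ℤ, j ∉ Finset.Icc (-(N : ℤ)) (N : ℤ) → b t j = 0)
    (hode : ∀ t : ℝ, ∀ j : ℤ, HasDerivAt (fun s => b s j)
      (Complex.I * (-(((‖b t j‖ : ℝ)) : ℂ) ^ 2 * b t j
        + 2 * (b t (j - 1)) ^ 2 * (starRingEnd ℂ) (b t j)
        + 2 * (b t (j + 1)) ^ 2 * (starRingEnd ℂ) (b t j))) t) :
    ∀ t : ℝ,
      HasDerivAt (fun s => toyM N (b s)) 0 t ∧ HasDerivAt (fun s => toyH N (b s)) 0 t := by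
  intro t
  have hbd : ∀ j : ℤ, HasDerivAt (fun s => b s j) (toyD b t j) t := hode t
  have hNN : -(N : ℤ) ≤ (N : ℤ) := by omega
  have hlow : b t (-(N : ℤ) - 1) = 0 := hsupp t _ (by simp only [Finset.mem_Icc]; omega)
  have hhigh : b t ((N : ℤ) + 1) = 0 := hsupp t _ (by simp only [Finset.mem_Icc]; omega)
  constructor
  · -- mass
    have hfun : (fun s => toyM N (b s))
        = fun s => ∑ j ∈ Finset.Icc (-(N : ℤ)) (N : ℤ),
            (b s j * (starRingEnd ℂ) (b s j)).re := by
      funext s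
      refine Finset.sum_congr rfl fun j _ => ?_
      rw [Complex.mul_conj, Complex.ofReal_re, Complex.sq_norm]
    rw [hfun]
    have hsum : HasDerivAt
        (fun s => ∑ j ∈ Finset.Icc (-(N : ℤ)) (N : ℤ), (b s j * (starRingEnd ℂ) (b s j)).re)
        (∑ j ∈ Finset.Icc (-(N : ℤ)) (N : ℤ),
          (toyD b t j * (starRingEnd ℂ) (b t j) + b t j * (starRingEnd ℂ) (toyD b t j)).re) t :=
      HasDerivAt.fun_sum fun j _ =>
        Complex.reCLM.hasFDerivAt.comp_hasDerivAt t ((hbd j).mul (hbd j).star)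
    have hzero : (∑ j ∈ Finset.Icc (-(N : ℤ)) (N : ℤ),
        (toyD b t j * (starRingEnd ℂ) (b t j) + b t j * (starRingEnd ℂ) (toyD b t j)).re) = 0 := by
      have hcongr : (∑ j ∈ Finset.Icc (-(N : ℤ)) (N : ℤ),
          (toyD b t j * (starRingEnd ℂ) (b t j) + b t j * (starRingEnd ℂ) (toyD b t j)).re)
          = ∑ j ∈ Finset.Icc (-(N : ℤ)) (N : ℤ),
            ((fun k => (4 * Complex.I * (b t (k - 1)) ^ 2 * ((starRingEnd ℂ) (b t k)) ^ 2).re) j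
              - (fun k => (4 * Complex.I * (b t (k - 1)) ^ 2
                  * ((starRingEnd ℂ) (b t k)) ^ 2).re) (j + 1)) := by
        refine Finset.sum_congr rfl fun j _ => ?_
        simp only [toyD, add_sub_cancel_right]
        exact mass_point (b t j) (b t (j - 1)) (b t (j + 1))
      rw [hcongr, tele_aux _ _ _ hNN]
      simp [hlow, hhigh]
    rw [← hzero]
    exact hsum
  · -- Hamiltonian
    have hfun : (fun s => toyH N (b s))
        = fun s => ∑ j ∈ Finset.Icc (-(N : ℤ)) (N : ℤ),
            ((1 / 2 : ℝ) * ((b s j * (starRingEnd ℂ) (b s j)).re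
                * (b s j * (starRingEnd ℂ) (b s j)).re)
              - 2 * ((((starRingEnd ℂ) (b s j) * (starRingEnd ℂ) (b s j))
                  * (b s (j - 1) * b s (j - 1))).re)) := by
      funext s
      refine Finset.sum_congr rfl fun j _ => ?_
      rw [show ‖b s j‖ ^ 4 = (‖b s j‖ ^ 2) ^ 2 by ring,
        Complex.sq_norm, show (b s j * (starRingEnd ℂ) (b s j)).re
          = Complex.normSq (b s j) by rw [Complex.mul_conj, Complex.ofReal_re],
        show ((starRingEnd ℂ) (b s j) * (starRingEnd ℂ) (b s j)) * (b s (j - 1) * b s (j - 1))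
          = ((starRingEnd ℂ) (b s j)) ^ 2 * (b s (j - 1)) ^ 2 by ring]
      ring
    rw [hfun]
    have hsum : HasDerivAt
        (fun s => ∑ j ∈ Finset.Icc (-(N : ℤ)) (N : ℤ),
          ((1 / 2 : ℝ) * ((b s j * (starRingEnd ℂ) (b s j)).re
              * (b s j * (starRingEnd ℂ) (b s j)).re)
            - 2 * ((((starRingEnd ℂ) (b s j) * (starRingEnd ℂ) (b s j))
                * (b s (j - 1) * b s (j - 1))).re)))
        (∑ j ∈ Finset.Icc (-(N : ℤ)) (N : ℤ),
          ((1 / 2 : ℝ) * ((toyD b t j * (starRingEnd ℂ) (b t j)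
                + b t j * (starRingEnd ℂ) (toyD b t j)).re * (b t j * (starRingEnd ℂ) (b t j)).re
              + (b t j * (starRingEnd ℂ) (b t j)).re
                * (toyD b t j * (starRingEnd ℂ) (b t j)
                  + b t j * (starRingEnd ℂ) (toyD b t j)).re)
            - 2 * ((((starRingEnd ℂ) (toyD b t j) * (starRingEnd ℂ) (b t j)
                + (starRingEnd ℂ) (b t j) * (starRingEnd ℂ) (toyD b t j))
                  * (b t (j - 1) * b t (j - 1))
              + ((starRingEnd ℂ) (b t j) * (starRingEnd ℂ) (b t j))
                  * (toyD b t (j - 1) * b t (j - 1) + b t (j - 1) * toyD b t (j - 1))).re))) t := by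
      refine HasDerivAt.fun_sum fun j _ => ?_
      have hre := Complex.reCLM.hasFDerivAt.comp_hasDerivAt t ((hbd j).mul (hbd j).star)
      have h1 := (hre.mul hre).const_mul (1 / 2 : ℝ)
      have h2 := (Complex.reCLM.hasFDerivAt.comp_hasDerivAt t
        (((hbd j).star.mul (hbd j).star).mul ((hbd (j - 1)).mul (hbd (j - 1))))).const_mul (2 : ℝ)
      exact h1.sub h2
    have hzero : (∑ j ∈ Finset.Icc (-(N : ℤ)) (N : ℤ),
        ((1 / 2 : ℝ) * ((toyD b t j * (starRingEnd ℂ) (b t j)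
              + b t j * (starRingEnd ℂ) (toyD b t j)).re * (b t j * (starRingEnd ℂ) (b t j)).re
            + (b t j * (starRingEnd ℂ) (b t j)).re
              * (toyD b t j * (starRingEnd ℂ) (b t j)
                + b t j * (starRingEnd ℂ) (toyD b t j)).re)
          - 2 * ((((starRingEnd ℂ) (toyD b t j) * (starRingEnd ℂ) (b t j)
              + (starRingEnd ℂ) (b t j) * (starRingEnd ℂ) (toyD b t j))
                * (b t (j - 1) * b t (j - 1))
            + ((starRingEnd ℂ) (b t j) * (starRingEnd ℂ) (b t j))
                * (toyD b t (j - 1) * b t (j - 1) + b t (j - 1) * toyD b t (j - 1))).re))) = 0 := by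
      have hcongr : ∀ j : ℤ,
          ((1 / 2 : ℝ) * ((toyD b t j * (starRingEnd ℂ) (b t j)
              + b t j * (starRingEnd ℂ) (toyD b t j)).re * (b t j * (starRingEnd ℂ) (b t j)).re
            + (b t j * (starRingEnd ℂ) (b t j)).re
              * (toyD b t j * (starRingEnd ℂ) (b t j)
                + b t j * (starRingEnd ℂ) (toyD b t j)).re)
          - 2 * ((((starRingEnd ℂ) (toyD b t j) * (starRingEnd ℂ) (b t j)
              + (starRingEnd ℂ) (b t j) * (starRingEnd ℂ) (toyD b t j))
                * (b t (j - 1) * b t (j - 1))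
            + ((starRingEnd ℂ) (b t j) * (starRingEnd ℂ) (b t j))
                * (toyD b t (j - 1) * b t (j - 1) + b t (j - 1) * toyD b t (j - 1))).re))
          = (fun k => -4 * (((starRingEnd ℂ) (b t (k + 1)) * (starRingEnd ℂ) (b t (k + 1)))
              * (b t k * toyD b t k)).re) (j - 1)
            - (fun k => -4 * (((starRingEnd ℂ) (b t (k + 1)) * (starRingEnd ℂ) (b t (k + 1)))
              * (b t k * toyD b t k)).re) j := by
        intro j
        simp only [sub_add_cancel]
        generalize toyD b t (j - 1) = w
        simp only [toyD]
        exact ham_point (b t j) (b t (j - 1)) (b t (j + 1)) w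
      calc (∑ j ∈ Finset.Icc (-(N : ℤ)) (N : ℤ), _)
          = ∑ j ∈ Finset.Icc (-(N : ℤ)) (N : ℤ),
            ((fun k => (fun m => -4 * (((starRingEnd ℂ) (b t (m + 1))
                * (starRingEnd ℂ) (b t (m + 1))) * (b t m * toyD b t m)).re) (k - 1)) j
              - (fun k => (fun m => -4 * (((starRingEnd ℂ) (b t (m + 1))
                * (starRingEnd ℂ) (b t (m + 1))) * (b t m * toyD b t m)).re) (k - 1)) (j + 1)) := by
            refine Finset.sum_congr rfl fun j _ => ?_
            simp only [add_sub_cancel_right]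
            exact hcongr j
        _ = 0 := by
            rw [tele_aux _ _ _ hNN]
            simp [hlow, hhigh, add_sub_cancel_right]
    rw [← hzero]
    exact hsum
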